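/- arXiv:0709.2255 — 2 statements merged into one kernel-verified Lean document; each statement's English description precedes it below -/
import Mathlib

section
/- For every α ∈ (−1,1), every t > 0, every x ∈ ℝ, and every y ∈ ℝ \ {0}, the Poisson kernel is nonnegative: P_α(t,x;y) ≥ 0. -/
open MeasureTheory Filter Set
open scoped ENNReal NNReal

/-- Concavity of `sin` on `[0, π]`: `sin (c * u) ≥ c * sin u` for `c ∈ [0,1]`, `u ∈ [0, π]`. -/
lemma aux_sin_mul_le (c u : ℝ) (hc0 : 0 ≤ c) (hc1 : c ≤ 1) (hu0 : 0 ≤ u) (hu : u ≤ Real.pi) :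
    c * Real.sin u ≤ Real.sin (c * u) := by
  have h := strictConcaveOn_sin_Icc.concaveOn.2 (x := 0) (y := u)
    ⟨le_rfl, Real.pi_pos.le⟩ ⟨hu0, hu⟩ (sub_nonneg.2 hc1) hc0 (by ring)
  simpa using h

/-- The key scalar inequality behind the positivity of the Poisson kernel. -/
lemma aux_key (α θ u ρ : ℝ) (hα1 : -1 < α) (hα2 : α < 1) (hθ0 : 0 < θ) (hθ : θ ≤ Real.pi/2)
    (hu : 0 < u) (hρ : 0 < ρ) :
    ρ^2 * Real.sin (2*θ) * u ≤
      u ^ (-α) * (ρ ^ (α+1) * (u^2 * Real.sin ((1+α)*θ) + ρ^2 * Real.sin ((1-α)*θ))) := by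
  set l : ℝ := (1+α)/2 with hl
  have hl0 : 0 ≤ l := by rw [hl]; linarith
  have hl1 : l ≤ 1 := by rw [hl]; linarith
  have h2θ0 : 0 ≤ 2*θ := by linarith
  have h2θπ : 2*θ ≤ Real.pi := by linarith
  have hsin2 : 0 ≤ Real.sin (2*θ) := Real.sin_nonneg_of_nonneg_of_le_pi h2θ0 h2θπ
  have h1 : l * Real.sin (2*θ) ≤ Real.sin ((1+α)*θ) := by
    have := aux_sin_mul_le l (2*θ) hl0 hl1 h2θ0 h2θπ
    have he : l * (2*θ) = (1+α)*θ := by rw [hl]; ring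
    rwa [he] at this
  have h2 : (1-l) * Real.sin (2*θ) ≤ Real.sin ((1-α)*θ) := by
    have := aux_sin_mul_le (1-l) (2*θ) (by linarith) (by linarith) h2θ0 h2θπ
    have he : (1-l) * (2*θ) = (1-α)*θ := by rw [hl]; ring
    rwa [he] at this
  -- weighted AM-GM
  have hgm : (u^2) ^ l * (ρ^2) ^ (1-l) ≤ l * u^2 + (1-l) * ρ^2 :=
    Real.geom_mean_le_arith_mean2_weighted hl0 (by linarith) (by positivity) (by positivity)
      (by ring)
  have hu2 : (u^2 : ℝ) ^ l = u ^ (1+α) := by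
    rw [← Real.rpow_natCast u 2, ← Real.rpow_mul hu.le, hl]
    norm_num
    congr 1; ring
  have hρ2 : (ρ^2 : ℝ) ^ (1-l) = ρ ^ (1-α) := by
    rw [← Real.rpow_natCast ρ 2, ← Real.rpow_mul hρ.le, hl]
    norm_num
    congr 1; ring
  rw [hu2, hρ2] at hgm
  -- combine
  have hmain : (u ^ (1+α) * ρ ^ (1-α)) * Real.sin (2*θ)
      ≤ u^2 * Real.sin ((1+α)*θ) + ρ^2 * Real.sin ((1-α)*θ) := by
    calc (u ^ (1+α) * ρ ^ (1-α)) * Real.sin (2*θ)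
        ≤ (l * u^2 + (1-l) * ρ^2) * Real.sin (2*θ) := by
          apply mul_le_mul_of_nonneg_right hgm hsin2
      _ = u^2 * (l * Real.sin (2*θ)) + ρ^2 * ((1-l) * Real.sin (2*θ)) := by ring
      _ ≤ u^2 * Real.sin ((1+α)*θ) + ρ^2 * Real.sin ((1-α)*θ) := by
          gcongr <;> positivity
  have hfac : u ^ (-α) * ρ ^ (α+1) * (u ^ (1+α) * ρ ^ (1-α)) = u * ρ^2 := by
    have e1 : u ^ (-α) * u ^ (1+α) = u := by
      rw [← Real.rpow_add hu]; norm_num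
    have e2 : ρ ^ (α+1) * ρ ^ (1-α) = ρ^2 := by
      rw [← Real.rpow_add hρ, ← Real.rpow_natCast ρ 2]; congr 1; push_cast; ring
    calc u ^ (-α) * ρ ^ (α+1) * (u ^ (1+α) * ρ ^ (1-α))
        = (u ^ (-α) * u ^ (1+α)) * (ρ ^ (α+1) * ρ ^ (1-α)) := by ring
      _ = u * ρ^2 := by rw [e1, e2]
  calc ρ^2 * Real.sin (2*θ) * u
      = (u ^ (-α) * ρ ^ (α+1)) * ((u ^ (1+α) * ρ ^ (1-α)) * Real.sin (2*θ)) := by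
        rw [show (u ^ (-α) * ρ ^ (α+1)) * ((u ^ (1+α) * ρ ^ (1-α)) * Real.sin (2*θ))
          = (u ^ (-α) * ρ ^ (α+1) * (u ^ (1+α) * ρ ^ (1-α))) * Real.sin (2*θ) by ring, hfac]
        ring
    _ ≤ (u ^ (-α) * ρ ^ (α+1)) * (u^2 * Real.sin ((1+α)*θ) + ρ^2 * Real.sin ((1-α)*θ)) := by
        have : (0:ℝ) ≤ u ^ (-α) * ρ ^ (α+1) := by positivity
        exact mul_le_mul_of_nonneg_left hmain this
    _ = u ^ (-α) * (ρ ^ (α+1) * (u^2 * Real.sin ((1+α)*θ) + ρ^2 * Real.sin ((1-α)*θ))) := by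
        ring

/-- The Poisson kernel `P_α(t,x;y)`, with complex powers taken in the principal branch. -/
noncomputable def poissonKernelAlpha (α t x y : ℝ) : ℝ :=
  (1 / Real.pi) *
    (2 * x * t * y +
        |y| ^ (-α) *
          (((((|x| : ℝ) : ℂ) + t * Complex.I) ^ ((α : ℂ) + 1) *
              ((y : ℂ) ^ 2 - (((|x| : ℝ) : ℂ) - t * Complex.I) ^ 2)).im)) /
    ((t ^ 2 + (x - y) ^ 2) * (t ^ 2 + (x + y) ^ 2))

/-- for `α ∈ (-1,1)` the Poisson kernel is nonnegative. -/
theorem poissonKernel_nonneg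
    (α : ℝ) (hα : α ∈ Ioo (-1 : ℝ) 1) (t : ℝ) (ht : 0 < t) (x : ℝ) (y : ℝ) (hy : y ≠ 0) :
    0 ≤ poissonKernelAlpha α t x y := by
  obtain ⟨hα1, hα2⟩ := hα
  unfold poissonKernelAlpha
  set r : ℝ := |x| with hrdef
  have hr : 0 ≤ r := abs_nonneg x
  set z : ℂ := (r : ℝ) + t * Complex.I with hzdef
  have hzre : z.re = r := by simp [hzdef]
  have hzim : z.im = t := by simp [hzdef]
  have hz : z ≠ 0 := by
    intro h
    rw [h] at hzim
    simp at hzim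
    exact ht.ne' hzim.symm
  set ρ : ℝ := ‖z‖ with hρdef
  have hρ : 0 < ρ := by
    have := norm_pos_iff.2 hz
    simpa [hρdef] using this
  set θ : ℝ := Complex.arg z with hθdef
  have hθ0 : 0 < θ := by
    rcases (Complex.arg_nonneg_iff.2 (by rw [hzim]; exact ht.le)).lt_or_eq with h | h
    · exact h
    · exact absurd (Complex.arg_eq_zero_iff.1 h.symm).2 (by rw [hzim]; exact ht.ne')
  have hθπ : θ ≤ Real.pi / 2 := by
    rw [hθdef]
    exact Complex.arg_le_pi_div_two_iff.2 (Or.inl (by rw [hzre]; exact hr))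
  have hcos : r = ρ * Real.cos θ := by
    have := Complex.cos_arg hz
    rw [← hθdef, ← hρdef, hzre] at this
    rw [this]; field_simp
  have hsin : t = ρ * Real.sin θ := by
    have := Complex.sin_arg z
    rw [← hθdef, ← hρdef, hzim] at this
    rw [this]; field_simp
  have hwre : ((α : ℂ) + 1).re = α + 1 := by simp
  have hwim : ((α : ℂ) + 1).im = 0 := by simp
  have hA : (z ^ ((α : ℂ) + 1)).re = ρ ^ (α + 1) * Real.cos ((α + 1) * θ) := by
    rw [Complex.cpow_def_of_ne_zero hz, Complex.exp_re, Complex.mul_re, Complex.mul_im,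
      Complex.log_re, Complex.log_im, hwre, hwim, ← hθdef, ← hρdef,
      Real.rpow_def_of_pos hρ]
    ring_nf
  have hB : (z ^ ((α : ℂ) + 1)).im = ρ ^ (α + 1) * Real.sin ((α + 1) * θ) := by
    rw [Complex.cpow_def_of_ne_zero hz, Complex.exp_im, Complex.mul_re, Complex.mul_im,
      Complex.log_re, Complex.log_im, hwre, hwim, ← hθdef, ← hρdef,
      Real.rpow_def_of_pos hρ]
    ring_nf
  have him : (z ^ ((α : ℂ) + 1) * ((y : ℂ) ^ 2 - (((r : ℝ) : ℂ) - t * Complex.I) ^ 2)).im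
      = ρ ^ (α + 1) * (y ^ 2 * Real.sin ((1 + α) * θ) + ρ ^ 2 * Real.sin ((1 - α) * θ)) := by
    rw [Complex.mul_im, hA, hB]
    have h1 : ((y : ℂ) ^ 2 - (((r : ℝ) : ℂ) - t * Complex.I) ^ 2).re = y ^ 2 - r ^ 2 + t ^ 2 := by
      simp [Complex.sub_re, Complex.sub_im, pow_two, Complex.mul_re, Complex.mul_im]
      ring
    have h2 : ((y : ℂ) ^ 2 - (((r : ℝ) : ℂ) - t * Complex.I) ^ 2).im = 2 * r * t := by
      simp [Complex.sub_re, Complex.sub_im, pow_two, Complex.mul_re, Complex.mul_im]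
      ring
    rw [h1, h2]
    rw [hcos, hsin]
    have e1 : (1 + α) * θ = (α + 1) * θ := by ring
    have e2 : (1 - α) * θ = 2 * θ - (α + 1) * θ := by ring
    rw [e1, e2, Real.sin_sub, Real.sin_two_mul, Real.cos_two_mul']
    ring_nf
  rw [him]
  apply div_nonneg _ (by positivity)
  apply mul_nonneg (by positivity)
  -- numerator nonnegativity
  have hu : 0 < |y| := abs_pos.2 hy
  have hkey := aux_key α θ |y| ρ hα1 hα2 hθ0 hθπ hu hρ
  rw [sq_abs] at hkey
  have h2rt : ρ^2 * Real.sin (2*θ) * |y| = 2 * r * t * |y| := by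
    rw [hcos, hsin, Real.sin_two_mul]; ring
  have hxy : -(2 * r * t * |y|) ≤ 2 * x * t * y := by
    have h1 : -(|x| * |y|) ≤ x * y := by rw [← abs_mul]; exact neg_abs_le _
    nlinarith [ht.le]
  rw [h2rt] at hkey
  linarith
end

section
/- Let α ∈ (−2,−1) and let u : ℝ → ℝ be continuous with compact support, u ≥ 0, and ∫_ℝ u > 0. Define U(t,0) := ∫_ℝ P_α(t,0;y) u(y) dy = (cos(πα/2)/π) ∫_ℝ ( t^{1+α} |y|^{−α} / (t² + y²) ) u(y) dy for t > 0. Then lim_{t→0⁺} U(t,0) = −∞. (This shows the signed harmonic measure for this branch does not contradict the maximum principle: the solution is unbounded below near the origin even for nonnegative smooth boundary data.) -/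
open MeasureTheory Filter Set
open scoped ENNReal NNReal

/-- for `α ∈ (-2,-1)` and `u ≥ 0` continuous with compact support and
`∫ u > 0`, the boundary-axis values
`U(t,0) = (cos(πα/2)/π)∫ t^{1+α}|y|^{-α}/(t²+y²) u(y) dy` tend to `-∞` as `t → 0⁺`. -/
theorem axis_values_tendsto_neg_infinity
    (α : ℝ) (hα : α ∈ Ioo (-2 : ℝ) (-1 : ℝ))
    (u : ℝ → ℝ) (hu : Continuous u) (hus : HasCompactSupport u)
    (hupos : ∀ y : ℝ, 0 ≤ u y) (hint : 0 < ∫ y : ℝ, u y) :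
    Tendsto
      (fun t : ℝ => (Real.cos (Real.pi * α / 2) / Real.pi) *
        ∫ y : ℝ, t ^ (1 + α) * |y| ^ (-α) / (t ^ 2 + y ^ 2) * u y)
      (nhdsWithin 0 (Ioi 0)) atBot := by
  obtain ⟨hα1, hα2⟩ := hα
  have hπ := Real.pi_pos
  -- the constant is negative
  have hcneg : Real.cos (Real.pi * α / 2) / Real.pi < 0 := by
    have h1 : Real.pi / 2 < -(Real.pi * α / 2) := by nlinarith
    have h2 : -(Real.pi * α / 2) < Real.pi + Real.pi / 2 := by nlinarith
    have := Real.cos_neg_of_pi_div_two_lt_of_lt h1 h2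
    rw [Real.cos_neg] at this
    exact div_neg_of_neg_of_pos this hπ
  -- continuity of |y|^(-α)
  have cont_k : Continuous fun y : ℝ => |y| ^ (-α) := by
    rw [continuous_iff_continuousAt]
    intro y
    exact (Real.continuousAt_rpow_const _ _ (Or.inr (by linarith))).comp
      continuous_abs.continuousAt
  -- integrability
  have key : ∀ a : ℝ, 0 < a →
      Integrable (fun y : ℝ => |y| ^ (-α) / (a + y ^ 2) * u y) volume := by
    intro a ha
    have hden : Continuous fun y : ℝ => a + y ^ 2 := by continuity
    have hc : Continuous fun y : ℝ => |y| ^ (-α) / (a + y ^ 2) * u y :=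
      (cont_k.div hden fun y => by positivity).mul hu
    have hcs : HasCompactSupport (fun y : ℝ => |y| ^ (-α) / (a + y ^ 2) * u y) :=
      hus.mul_left
    exact hc.integrable_of_hasCompactSupport (μ := volume) hcs
  -- positivity of J
  set J : ℝ := ∫ y : ℝ, |y| ^ (-α) / (1 + y ^ 2) * u y with hJdef
  have hJ : 0 < J := by
    have huint : Integrable u volume := hu.integrable_of_hasCompactSupport hus
    have hsupp : 0 < volume (Function.support u) :=
      (integral_pos_iff_support_of_nonneg hupos huint).mp hint
    have hne : (Function.support u \ {0}).Nonempty := by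
      rw [Set.nonempty_iff_ne_empty]
      intro h
      have hsub : Function.support u ⊆ {0} := by
        intro x hx
        by_contra hx0
        exact absurd (Set.mem_diff_of_mem hx hx0) (by simp [h])
      have := measure_mono hsub (μ := volume)
      simp only [Real.volume_singleton] at this
      exact absurd (le_antisymm this (zero_le)) hsupp.ne'
    obtain ⟨y₀, hy₀s, hy₀0⟩ := hne
    simp only [Set.mem_singleton_iff] at hy₀0
    set f : ℝ → ℝ := fun y => |y| ^ (-α) / (1 + y ^ 2) * u y with hfdef
    have hfpos : ∀ y, 0 ≤ f y := fun y => by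
      have : (0:ℝ) ≤ |y| ^ (-α) := Real.rpow_nonneg (abs_nonneg y) _
      have h2 : (0:ℝ) < 1 + y ^ 2 := by positivity
      exact mul_nonneg (div_nonneg this h2.le) (hupos y)
    have hfy₀ : 0 < f y₀ := by
      have h0 : (0:ℝ) < |y₀| := abs_pos.mpr hy₀0
      have h1 : (0:ℝ) < |y₀| ^ (-α) := Real.rpow_pos_of_pos h0 _
      have h2 : (0:ℝ) < 1 + y₀ ^ 2 := by positivity
      have h3 : 0 < u y₀ := lt_of_le_of_ne (hupos y₀) (Ne.symm hy₀s)
      exact mul_pos (div_pos h1 h2) h3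
    have hden : Continuous fun y : ℝ => 1 + y ^ 2 := by continuity
    have hfc : Continuous f := (cont_k.div hden fun y => by positivity).mul hu
    rw [integral_pos_iff_support_of_nonneg hfpos (key 1 one_pos)]
    have hopen : IsOpen (f ⁻¹' Set.Ioi 0) := (isOpen_Ioi).preimage hfc
    have hsub : f ⁻¹' Set.Ioi 0 ⊆ Function.support f := fun x hx =>
      (Set.mem_Ioi.mp hx).ne'
    exact lt_of_lt_of_le (hopen.measure_pos volume ⟨y₀, hfy₀⟩) (measure_mono hsub)
  -- rewrite the integral
  have hform : ∀ t : ℝ,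
      (∫ y : ℝ, t ^ (1 + α) * |y| ^ (-α) / (t ^ 2 + y ^ 2) * u y)
        = t ^ (1 + α) * ∫ y : ℝ, |y| ^ (-α) / (t ^ 2 + y ^ 2) * u y := by
    intro t
    rw [← integral_const_mul]
    congr 1; funext y; ring
  -- t^(1+α) → ∞
  have hpow : Tendsto (fun t : ℝ => t ^ (1 + α)) (nhdsWithin 0 (Ioi 0)) atTop := by
    have h := (tendsto_rpow_atTop (show (0:ℝ) < -(1 + α) by linarith)).comp
      tendsto_inv_nhdsGT_zero
    refine h.congr' ?_
    filter_upwards [self_mem_nhdsWithin] with t ht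
    have ht' : (0:ℝ) < t := ht
    simp only [Function.comp_apply]
    rw [Real.inv_rpow ht'.le, ← Real.rpow_neg ht'.le, neg_neg]
  -- the integral tends to atTop
  have hI : Tendsto
      (fun t : ℝ => ∫ y : ℝ, t ^ (1 + α) * |y| ^ (-α) / (t ^ 2 + y ^ 2) * u y)
      (nhdsWithin 0 (Ioi 0)) atTop := by
    refine tendsto_atTop_mono' _ ?_ (hpow.atTop_mul_const hJ)
    filter_upwards [Ioc_mem_nhdsGT_of_mem (Set.mem_Ico.mpr ⟨le_rfl, zero_lt_one⟩)]
      with t ht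
    obtain ⟨ht0, ht1⟩ := ht
    rw [hform t]
    have hmono : J ≤ ∫ y : ℝ, |y| ^ (-α) / (t ^ 2 + y ^ 2) * u y := by
      refine integral_mono (key 1 one_pos) (key (t ^ 2) (by positivity)) fun y => ?_
      have hk : (0:ℝ) ≤ |y| ^ (-α) := Real.rpow_nonneg (abs_nonneg y) _
      have ht2 : t ^ 2 + y ^ 2 ≤ 1 + y ^ 2 := by nlinarith
      have hd : (0:ℝ) < t ^ 2 + y ^ 2 := by positivity
      exact mul_le_mul_of_nonneg_right
        (div_le_div_of_nonneg_left hk hd ht2) (hupos y)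
    exact mul_le_mul_of_nonneg_left hmono (Real.rpow_nonneg ht0.le _)
  exact (tendsto_const_mul_atBot_of_neg hcneg).mpr hI
end
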